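/- For every additive group homomorphism h : ℤ⁴ → ℤ there is a lattice root α of Γ^{2,2} with h(α) = 0; hence there is no integer-valued linear height function on Γ^{2,2} that is non-vanishing on all lattice roots. -/

import Mathlib

/-- A lattice root of `Γ^{2,2}`: an element `(k,l,m,n)` with `kl + mn = -1`,
equivalently of norm `B(α,α) = 2`. -/
def IsLatticeRoot (α : Fin 4 → ℤ) : Prop :=
  α 0 * α 1 + α 2 * α 3 = -1

/- Auxiliary predicate: the covector `(a,b,c,d)` kills some lattice root. -/
private def P (a b c d : ℤ) : Prop :=
  ∃ k l m n : ℤ, k * l + m * n = -1 ∧ a * k + b * l + c * m + d * n = 0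

private lemma P_klswap {a b c d : ℤ} (h : P b a c d) : P a b c d := by
  obtain ⟨k, l, m, n, h1, h2⟩ := h
  exact ⟨l, k, m, n, by linarith [h1], by linarith [h2]⟩

private lemma P_mnswap {a b c d : ℤ} (h : P a b d c) : P a b c d := by
  obtain ⟨k, l, m, n, h1, h2⟩ := h
  exact ⟨k, l, n, m, by linarith [h1], by linarith [h2]⟩

private lemma P_pairswap {a b c d : ℤ} (h : P c d a b) : P a b c d := by
  obtain ⟨k, l, m, n, h1, h2⟩ := h
  exact ⟨m, n, k, l, by linarith [h1], by linarith [h2]⟩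

/-- Transvection move T1. -/
private lemma P_T1 {a b c d : ℤ} (t : ℤ) (h : P a (b - t * d) (c + t * a) d) :
    P a b c d := by
  obtain ⟨k, l, m, n, h1, h2⟩ := h
  refine ⟨k + t * m, l, m, n - t * l, by ring_nf; ring_nf at h1; linarith, ?_⟩
  ring_nf; ring_nf at h2; linarith

/-- Transvection move T2. -/
private lemma P_T2 {a b c d : ℤ} (t : ℤ) (h : P a (b - t * c) c (d + t * a)) :
    P a b c d := by
  obtain ⟨k, l, m, n, h1, h2⟩ := h
  refine ⟨k + t * n, l, m - t * l, n, by ring_nf; ring_nf at h1; linarith, ?_⟩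
  ring_nf; ring_nf at h2; linarith

/-- Terminal case: `a ∣ c - d`. -/
private lemma P_dvd {a b c d : ℤ} (h : a ∣ c - d) : P a b c d := by
  obtain ⟨k, hk⟩ := h
  exact ⟨-k, 0, 1, -1, by ring, by linarith [hk]⟩

/-- Main reduction: if `a ≠ 0` then `P a b c d`, by strong induction on `|a|`. -/
private lemma P_main : ∀ N : ℕ, ∀ a b c d : ℤ, a.natAbs ≤ N → a ≠ 0 → P a b c d := by
  intro N
  induction N with
  | zero => intro a b c d hle ha; exact absurd (Int.natAbs_eq_zero.mp (Nat.le_zero.mp hle)) ha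
  | succ N ih =>
    intro a b c d hle ha
    by_cases hdvd : a ∣ c - d
    · exact P_dvd hdvd
    · have key : ∀ x : ℤ, ¬ a ∣ x → (x % a ≠ 0 ∧ (x % a).natAbs ≤ N) := by
        intro x hx
        constructor
        · intro h0; exact hx (Int.dvd_of_emod_eq_zero h0)
        · have h1 : 0 ≤ x % a := Int.emod_nonneg x ha
          have h2 : x % a < |a| := by rw [Int.abs_eq_natAbs]; exact Int.emod_lt x ha
          have h3 : |a| = (a.natAbs : ℤ) := Int.abs_eq_natAbs a
          have h4 : a.natAbs ≤ N + 1 := hle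
          omega
      have hmod : ∀ x : ℤ, x % a = x + (-(x / a)) * a := by
        intro x
        have := Int.emod_def x a
        linarith [this]
      have hcd : ¬ a ∣ c ∨ ¬ a ∣ d := by
        by_contra hcon
        push_neg at hcon
        exact hdvd (dvd_sub hcon.1 hcon.2)
      rcases hcd with hc | hd
      · obtain ⟨hne, hN⟩ := key c hc
        refine P_T1 (-(c / a)) (P_pairswap ?_)
        rw [← hmod c]
        exact ih (c % a) d a (b - -(c / a) * d) hN hne
      · obtain ⟨hne, hN⟩ := key d hd
        refine P_T2 (-(d / a)) (P_mnswap (P_pairswap ?_))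
        rw [← hmod d]
        exact ih (d % a) c a (b - -(d / a) * c) hN hne

private lemma P_all (a b c d : ℤ) : P a b c d := by
  by_cases ha : a ≠ 0
  · exact P_main a.natAbs a b c d le_rfl ha
  by_cases hb : b ≠ 0
  · exact P_klswap (P_main b.natAbs b a c d le_rfl hb)
  by_cases hc : c ≠ 0
  · exact P_pairswap (P_main c.natAbs c d a b le_rfl hc)
  by_cases hd : d ≠ 0
  · exact P_pairswap (P_klswap (P_main d.natAbs d c a b le_rfl hd))
  push_neg at ha hb hc hd
  subst ha; subst hb; subst hc; subst hd
  exact ⟨1, -1, 0, 0, by ring, by ring⟩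

/-- For every additive group homomorphism `h : ℤ⁴ → ℤ` there is a lattice root
of `Γ^{2,2}` on which `h` vanishes: there is no integer-valued linear height
function non-vanishing on all lattice roots. -/
theorem no_integral_height_function (h : (Fin 4 → ℤ) →+ ℤ) :
    ∃ α : Fin 4 → ℤ, IsLatticeRoot α ∧ h α = 0 := by
  obtain ⟨k, l, m, n, h1, h2⟩ := P_all (h (Pi.single 0 1)) (h (Pi.single 1 1))
    (h (Pi.single 2 1)) (h (Pi.single 3 1))
  refine ⟨![k, l, m, n], ?_, ?_⟩
  · show k * l + m * n = -1
    exact h1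
  · have hdec : (![k, l, m, n] : Fin 4 → ℤ) =
        k • Pi.single 0 1 + l • Pi.single 1 1 + m • Pi.single 2 1 + n • Pi.single 3 1 := by
      funext i
      fin_cases i <;> simp [Pi.single, Function.update]
    rw [hdec, map_add, map_add, map_add, AddMonoidHom.map_zsmul, AddMonoidHom.map_zsmul,
      AddMonoidHom.map_zsmul, AddMonoidHom.map_zsmul]
    simpa [smul_eq_mul, mul_comm] using h2
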